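/- Let R be an s-unital ring and I an s-unital two-sided ideal of R. Assume that every nonzero two-sided ideal in every quotient of the ring I contains a nonzero idempotent. Then R is properly purely infinite if and only if both I and R/I are properly purely infinite. -/

import Mathlib

/-- `x ≼ y` for square matrices over a (possibly nonunital) ring: `x = α * y * β`
for some rectangular matrices `α`, `β`. -/
def MatSub {R : Type*} [NonUnitalRing R] {k n : ℕ}
    (x : Matrix (Fin k) (Fin k) R) (y : Matrix (Fin n) (Fin n) R) : Prop :=
  ∃ (α : Matrix (Fin k) (Fin n) R) (β : Matrix (Fin n) (Fin k) R), x = α * y * β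

/-- `a ⊕ b ≼ c` for ring elements: the block-diagonal matrix `diag(a, b)` satisfies
`diag(a,b) ≼ (c)` as square matrices. -/
def PairSub {R : Type*} [NonUnitalRing R] (a b c : R) : Prop :=
  MatSub !![a, 0; 0, b] !![c]

/-- `a ≼ b` for ring elements: `a = α * b * β` for some ring elements. -/
def ElemSub {R : Type*} [NonUnitalRing R] (a b : R) : Prop :=
  ∃ α β : R, a = α * b * β

/-- `K(a) = { x | a ⊕ x ≼ a }`. -/
def KSet {R : Type*} [NonUnitalRing R] (a : R) : Set R := { x | PairSub a x a }

/-- An element `a` is infinite if `a ⊕ x ≼ a` for some nonzero `x`, i.e. `K(a) ≠ 0`. -/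
def IsInfiniteElem {R : Type*} [NonUnitalRing R] (a : R) : Prop :=
  ∃ x : R, x ≠ 0 ∧ PairSub a x a

/-- An element `a` is properly infinite if `a ≠ 0` and `a ⊕ a ≼ a`. -/
def IsProperlyInfiniteElem {R : Type*} [NonUnitalRing R] (a : R) : Prop :=
  a ≠ 0 ∧ PairSub a a a

/-- A ring is s-unital if each element `x` admits `u, v` with `u * x = x` and `x * v = x`. -/
def IsSUnitalRing (R : Type*) [NonUnitalRing R] : Prop :=
  ∀ x : R, (∃ u : R, u * x = x) ∧ (∃ v : R, x * v = x)

/-- `b` belongs to `RaR`, the set of finite sums `Σ xᵢ * a * yᵢ`. -/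
def MemRaR {R : Type*} [NonUnitalRing R] (a b : R) : Prop :=
  ∃ (n : ℕ) (x y : Fin n → R), b = ∑ i, x i * a * y i

/-- A (possibly nonunital) ring is a division ring: it has a nonzero multiplicative identity
with respect to which every nonzero element is two-sided invertible. -/
def IsDivisionRingPred (R : Type*) [NonUnitalRing R] : Prop :=
  ∃ u : R, u ≠ 0 ∧ (∀ x : R, u * x = x ∧ x * u = x) ∧
    ∀ x : R, x ≠ 0 → ∃ y : R, x * y = u ∧ y * x = u

/-- A ring `R` is purely infinite if no quotient of `R` by a two-sided ideal is a division
ring, and `b ∈ RaR` implies `b = x * a * y` for some `x, y ∈ R`. -/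
def IsPurelyInfiniteRing (R : Type*) [NonUnitalRing R] : Prop :=
  (∀ I : TwoSidedIdeal R, ¬ IsDivisionRingPred I.ringCon.Quotient) ∧
  ∀ a b : R, MemRaR a b → ElemSub b a

/-- A ring is properly purely infinite if every nonzero element is properly infinite. -/
def IsProperlyPurelyInfiniteRing (R : Type*) [NonUnitalRing R] : Prop :=
  ∀ a : R, a ≠ 0 → IsProperlyInfiniteElem a

/-- An idempotent `e` is infinite if `e ∼ f ≤ e` for some idempotent `f ≠ e`. -/
def IsInfiniteIdem {R : Type*} [NonUnitalRing R] (e : R) : Prop :=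
  IsIdempotentElem e ∧ ∃ f : R, IsIdempotentElem f ∧ (∃ x y : R, e = x * y ∧ f = y * x) ∧
    e * f = f ∧ f * e = f ∧ f ≠ e

/-- An exchange ring: for each `x` there are an idempotent `e` and elements `r, s` with
`e = x * r = x + s - x * s`. -/
def IsExchangeRing (R : Type*) [NonUnitalRing R] : Prop :=
  ∀ x : R, ∃ e r s : R, IsIdempotentElem e ∧ e = x * r ∧ e = x + s - x * s

/-- A ring has local units if every finite subset is contained in a corner `eRe`
for some idempotent `e`. -/
def HasLocalUnits (R : Type*) [NonUnitalRing R] : Prop :=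
  ∀ s : Finset R, ∃ e : R, IsIdempotentElem e ∧ ∀ x ∈ s, ∃ r : R, x = e * r * e

lemma pairSub_of {R : Type*} [NonUnitalRing R] {a b c : R} (g1 g2 d1 d2 : R)
    (h11 : g1*c*d1 = a) (h12 : g1*c*d2 = 0) (h21 : g2*c*d1 = 0) (h22 : g2*c*d2 = b) :
    PairSub a b c := by
  refine ⟨!![g1; g2], !![d1, d2], ?_⟩
  ext i j
  fin_cases i <;> fin_cases j <;>
    simp [Matrix.mul_apply, Fin.sum_univ_succ, h11, h12, h21, h22]

lemma pairSub_elim {R : Type*} [NonUnitalRing R] {a b c : R} (h : PairSub a b c) :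
    ∃ g1 g2 d1 d2 : R, g1*c*d1 = a ∧ g1*c*d2 = 0 ∧ g2*c*d1 = 0 ∧ g2*c*d2 = b := by
  obtain ⟨α, β, hab⟩ := h
  have e00 := congrFun (congrFun hab 0) 0
  have e01 := congrFun (congrFun hab 0) 1
  have e10 := congrFun (congrFun hab 1) 0
  have e11 := congrFun (congrFun hab 1) 1
  refine ⟨α 0 0, α 1 0, β 0 0, β 0 1, ?_, ?_, ?_, ?_⟩
  · simpa [Matrix.mul_apply, Fin.sum_univ_succ] using e00.symm
  · simpa [Matrix.mul_apply, Fin.sum_univ_succ] using e01.symm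
  · simpa [Matrix.mul_apply, Fin.sum_univ_succ] using e10.symm
  · simpa [Matrix.mul_apply, Fin.sum_univ_succ] using e11.symm

section Joint

variable {R : Type*} [NonUnitalRing R]

/-- mini helper: `(p*γ)*a*(δ*q) = p*(γ*a*δ)*q`. -/
lemma sandwich (p γ a δ q : R) : (p*γ)*a*(δ*q) = p*(γ*a*δ)*q := by noncomm_ring

/-- Joint orthogonal systems for finitely many elements of `K(a)`. -/
lemma joint_system (a : R) (hua : ∃ u v : R, u * a = a ∧ a * v = a)
    (n : ℕ) (x : Fin n → R) (hx : ∀ i, PairSub a (x i) a) :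
    ∃ (γ δ : R) (G D : Fin n → R), γ*a*δ = a ∧ (∀ i, γ*a*(D i) = 0) ∧
      (∀ i, (G i)*a*δ = 0) ∧ (∀ i j, (G i)*a*(D j) = if i = j then x i else 0) := by
  induction n with
  | zero =>
    obtain ⟨u, v, hu, hv⟩ := hua
    exact ⟨u, v, Fin.elim0, Fin.elim0, by rw [hu, hv], fun i => i.elim0, fun i => i.elim0,
      fun i => i.elim0⟩
  | succ n ih =>
    obtain ⟨γ, δ, G, D, hm, hmD, hGm, hGD⟩ := ih (x ∘ Fin.succ) (fun i => hx i.succ)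
    obtain ⟨p, H, q, E, hpq, hpE, hHq, hHE⟩ := pairSub_elim (hx 0)
    refine ⟨p*γ, δ*q, Fin.cons (H*γ) G, Fin.cons (δ*E) D, ?_, ?_, ?_, ?_⟩
    · rw [sandwich, hm, hpq]
    · intro i
      refine Fin.cases ?_ (fun j => ?_) i
      · rw [Fin.cons_zero, sandwich, hm, hpE]
      · simp only [Fin.cons_succ]
        calc (p*γ)*a*(D j) = p*(γ*a*(D j)) := by noncomm_ring
          _ = 0 := by rw [hmD j, mul_zero]
    · intro i
      refine Fin.cases ?_ (fun j => ?_) i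
      · rw [Fin.cons_zero, sandwich, hm, hHq]
      · simp only [Fin.cons_succ]
        calc (G j)*a*(δ*q) = ((G j)*a*δ)*q := by noncomm_ring
          _ = 0 := by rw [hGm j, zero_mul]
    · intro i j
      refine Fin.cases ?_ (fun i' => ?_) i <;> refine Fin.cases ?_ (fun j' => ?_) j
      · rw [Fin.cons_zero, Fin.cons_zero, sandwich, hm, hHE]; simp
      · simp only [Fin.cons_zero, Fin.cons_succ]
        calc (H*γ)*a*(D j') = H*(γ*a*(D j')) := by noncomm_ring
          _ = 0 := by rw [hmD j', mul_zero]
        -- if-statement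
      · simp only [Fin.cons_zero, Fin.cons_succ]
        calc (G i')*a*(δ*E) = ((G i')*a*δ)*E := by noncomm_ring
          _ = 0 := by rw [hGm i', zero_mul]
      · simp only [Fin.cons_succ]
        rw [hGD i' j']
        by_cases h : i' = j' <;> simp [h, Fin.succ_inj]

end Joint

section KClosure

variable {R : Type*} [NonUnitalRing R] {a : R}

lemma K_zero (hua : ∃ u v : R, u * a = a ∧ a * v = a) : PairSub a 0 a := by
  obtain ⟨u, v, hu, hv⟩ := hua
  exact pairSub_of u 0 v 0 (by rw [hu, hv]) (by rw [mul_zero]) (by rw [zero_mul, zero_mul])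
    (by rw [mul_zero])

lemma K_add (hua : ∃ u v : R, u * a = a ∧ a * v = a) {x y : R}
    (hx : PairSub a x a) (hy : PairSub a y a) : PairSub a (x + y) a := by
  obtain ⟨γ, δ, G, D, hm, hmD, hGm, hGD⟩ := joint_system a hua 2 ![x, y]
    (by intro i; fin_cases i <;> assumption)
  refine pairSub_of γ (G 0 + G 1) δ (D 0 + D 1) hm ?_ ?_ ?_
  · rw [mul_add, hmD 0, hmD 1, add_zero]
  · rw [add_mul, add_mul, hGm 0, hGm 1, add_zero]
  · have e00 := hGD 0 0; have e01 := hGD 0 1; have e10 := hGD 1 0; have e11 := hGD 1 1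
    simp only [if_pos rfl] at e00 e11
    rw [if_neg (by decide)] at e01
    rw [if_neg (by decide)] at e10
    calc (G 0 + G 1)*a*(D 0 + D 1)
        = G 0*a*D 0 + G 0*a*D 1 + (G 1*a*D 0 + G 1*a*D 1) := by noncomm_ring
      _ = x + y := by
          rw [e00, e01, e10, e11]
          simp

lemma K_neg {x : R} (hx : PairSub a x a) : PairSub a (-x) a := by
  obtain ⟨γ, G, δ, D, hm, hmD, hGm, hGD⟩ := pairSub_elim hx
  refine pairSub_of γ (-G) δ D hm hmD ?_ ?_
  · rw [neg_mul, neg_mul, hGm, neg_zero]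
  · rw [neg_mul, neg_mul, hGD]

lemma K_mul_left (r : R) {x : R} (hx : PairSub a x a) : PairSub a (r*x) a := by
  obtain ⟨γ, G, δ, D, hm, hmD, hGm, hGD⟩ := pairSub_elim hx
  refine pairSub_of γ (r*G) δ D hm hmD ?_ ?_
  · calc (r*G)*a*δ = r*(G*a*δ) := by noncomm_ring
      _ = 0 := by rw [hGm, mul_zero]
  · calc (r*G)*a*D = r*(G*a*D) := by noncomm_ring
      _ = r*x := by rw [hGD]

lemma K_mul_right (r : R) {x : R} (hx : PairSub a x a) : PairSub a (x*r) a := by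
  obtain ⟨γ, G, δ, D, hm, hmD, hGm, hGD⟩ := pairSub_elim hx
  refine pairSub_of γ G δ (D*r) hm ?_ hGm ?_
  · calc γ*a*(D*r) = (γ*a*D)*r := by noncomm_ring
      _ = 0 := by rw [hmD, zero_mul]
  · calc G*a*(D*r) = (G*a*D)*r := by noncomm_ring
      _ = x*r := by rw [hGD]

lemma K_sub (hua : ∃ u v : R, u * a = a ∧ a * v = a) {x y : R}
    (hx : PairSub a x a) (hy : PairSub a y a) : PairSub a (x - y) a := by
  rw [sub_eq_add_neg]; exact K_add hua hx (K_neg hy)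

end KClosure

section Absorb

variable {R : Type*} [NonUnitalRing R] {a : R}

/-- Membership in `K(a)` can be tested modulo `K(a)`: a 2×2 system with all four
entries correct modulo `K(a)` can be repaired to an exact one. -/
lemma absorb (hua : ∃ u v : R, u * a = a ∧ a * v = a) {x : R} (A1 A2 B1 B2 : R)
    (h11 : PairSub a (A1*a*B1 - a) a) (h12 : PairSub a (A1*a*B2) a)
    (h21 : PairSub a (A2*a*B1) a) (h22 : PairSub a (A2*a*B2 - x) a) :
    PairSub a x a := by
  obtain ⟨γ, δ, G, D, hm, hmD, hGm, hGD⟩ := joint_system a hua 4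
    ![-(A1*a*B1 - a), -(A1*a*B2), -(A2*a*B1), -(A2*a*B2 - x)]
    (by intro i; fin_cases i <;> simp only [Matrix.cons_val_zero, Matrix.cons_val_one,
          Matrix.head_cons, Matrix.cons_val_two, Matrix.tail_cons, Matrix.cons_val_three] <;>
        first
          | exact K_neg h11
          | exact K_neg h12
          | exact K_neg h21
          | exact K_neg h22)
  have hL : ∀ (Γ : R) (i : Fin 4), (Γ*γ)*a*(D i) = 0 := fun Γ i => by
    calc (Γ*γ)*a*(D i) = Γ*(γ*a*(D i)) := by noncomm_ring
      _ = 0 := by rw [hmD, mul_zero]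
  have hRt : ∀ (Δ : R) (i : Fin 4), (G i)*a*(δ*Δ) = 0 := fun Δ i => by
    calc (G i)*a*(δ*Δ) = ((G i)*a*δ)*Δ := by noncomm_ring
      _ = 0 := by rw [hGm, zero_mul]
  have key : ∀ (Γ Δ : R) (i j k l : Fin 4),
      (Γ*γ + G i + G k)*a*(δ*Δ + D j + D l)
        = Γ*a*Δ + ((G i)*a*(D j) + (G i)*a*(D l) + (G k)*a*(D j) + (G k)*a*(D l)) := by
    intro Γ Δ i j k l
    have expand : (Γ*γ + G i + G k)*a*(δ*Δ + D j + D l)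
        = (Γ*γ)*a*(δ*Δ) + (Γ*γ)*a*(D j) + (Γ*γ)*a*(D l)
          + (G i)*a*(δ*Δ) + (G i)*a*(D j) + (G i)*a*(D l)
          + (G k)*a*(δ*Δ) + (G k)*a*(D j) + (G k)*a*(D l) := by noncomm_ring
    rw [expand, hL Γ j, hL Γ l, hRt Δ i, hRt Δ k, sandwich, hm]
    abel
  -- entries
  have hGD0 : ∀ i : Fin 4, (G i)*a*(D i) = ![-(A1*a*B1 - a), -(A1*a*B2), -(A2*a*B1),
      -(A2*a*B2 - x)] i := fun i => by rw [hGD i i, if_pos rfl]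
  have hGDne : ∀ i j : Fin 4, i ≠ j → (G i)*a*(D j) = 0 := fun i j h => by
    rw [hGD i j, if_neg h]
  refine pairSub_of (A1*γ + G 0 + G 1) (A2*γ + G 3 + G 2)
    (δ*B1 + D 0 + D 2) (δ*B2 + D 3 + D 1) ?_ ?_ ?_ ?_
  · rw [key A1 B1 0 0 1 2]
    rw [hGD0 0, hGDne 0 2 (by decide), hGDne 1 0 (by decide), hGDne 1 2 (by decide)]
    simp only [Matrix.cons_val_zero]
    abel
  · rw [key A1 B2 0 3 1 1]
    rw [hGD0 1, hGDne 0 3 (by decide), hGDne 0 1 (by decide), hGDne 1 3 (by decide)]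
    simp only [Matrix.cons_val_one, Matrix.head_cons]
    simp
  · rw [key A2 B1 3 0 2 2]
    rw [hGD0 2, hGDne 3 0 (by decide), hGDne 3 2 (by decide), hGDne 2 0 (by decide)]
    simp only [Matrix.cons_val_two, Matrix.tail_cons, Matrix.head_cons]
    abel
  · rw [key A2 B2 3 3 2 1]
    rw [hGD0 3, hGDne 3 1 (by decide), hGDne 2 3 (by decide), hGDne 2 1 (by decide)]
    simp only [Matrix.cons_val_three, Matrix.tail_cons, Matrix.head_cons]
    abel

end Absorb

section Frames

variable {R : Type*} [NonUnitalRing R]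

/-- Orthogonal frames for a properly infinite element. -/
lemma frames {y : R} (hua : ∃ u v : R, u * y = y ∧ y * v = y) (hy : PairSub y y y) (n : ℕ) :
    ∃ s t : Fin n → R, ∀ i j, (s i) * y * (t j) = if i = j then y else 0 := by
  obtain ⟨γ, δ, G, D, _, _, _, hGD⟩ := joint_system y hua n (fun _ => y) (fun _ => hy)
  exact ⟨G, D, fun i j => by simpa using hGD i j⟩

/-- Collapse of a finite sum `∑ Aᵢ m Bᵢ` into a single sandwich, using frames of `m`. -/
lemma collapse {m : R} (hua : ∃ u v : R, u * m = m ∧ m * v = m) (hm : PairSub m m m)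
    {T : ℕ} (A B : Fin T → R) :
    ∃ C E : R, (∑ t, A t * m * B t) = C * m * E := by
  obtain ⟨s, t, hst⟩ := frames hua hm T
  refine ⟨∑ i, A i * s i, ∑ j, t j * B j, ?_⟩
  have expand : (∑ i, A i * s i) * m * (∑ j, t j * B j)
      = ∑ j, ∑ i, A i * (s i * m * t j) * B j := by
    rw [Finset.mul_sum]
    refine Finset.sum_congr rfl (fun j _ => ?_)
    rw [Finset.sum_mul, Finset.sum_mul]
    refine Finset.sum_congr rfl (fun i _ => ?_)
    noncomm_ring
  have inner : ∀ j, (∑ i, A i * (s i * m * t j) * B j) = A j * m * B j := by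
    intro j
    rw [Finset.sum_congr rfl (fun i _ => by rw [hst i j])]
    simp only [mul_ite, mul_zero, ite_mul, zero_mul]
    rw [Finset.sum_ite_eq' Finset.univ j (fun i => A i * m * B j)]
    simp
  rw [expand, Finset.sum_congr rfl (fun j _ => inner j)]

end Frames

section Coe

variable {R : Type*} [NonUnitalRing R] (I : TwoSidedIdeal R)

lemma pairSub_coe {x y z : I} (h : PairSub x y z) :
    PairSub (x : R) (y : R) (z : R) := by
  obtain ⟨g1, g2, d1, d2, h11, h12, h21, h22⟩ := pairSub_elim h
  refine pairSub_of (g1 : R) (g2 : R) (d1 : R) (d2 : R) ?_ ?_ ?_ ?_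
  · exact congrArg Subtype.val h11
  · exact congrArg Subtype.val h12
  · exact congrArg Subtype.val h21
  · exact congrArg Subtype.val h22

end Coe

section AlmostGood

variable {R : Type*} [NonUnitalRing R]

/-- Key lemma: if `x = P*a*Q` is a single sandwich of `a`, `x` is properly infinite,
and `x` is idempotent modulo `K(a)`, then `x ∈ K(a)`. -/
lemma almostGood {a x P Q : R}
    (hua : ∃ u v : R, u * a = a ∧ a * v = a)
    (hxu : ∃ u v : R, u * x = x ∧ x * v = x)
    (hxfact : x = P*a*Q)
    (hxpi : PairSub x x x)
    (hk : PairSub a (x*x - x) a) :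
    PairSub a x a := by
  obtain ⟨u, v, hu, hv⟩ := hua
  have hua' : ∃ u v : R, u * a = a ∧ a * v = a := ⟨u, v, hu, hv⟩
  obtain ⟨f, g, hfg⟩ := frames hxu hxpi 3
  have h00 : f 0*x*g 0 = x := by simpa using hfg 0 0
  have h11 : f 1*x*g 1 = x := by simpa using hfg 1 1
  have h22 : f 2*x*g 2 = x := by simpa using hfg 2 2
  have h01 : f 0*x*g 1 = 0 := by
    have := hfg 0 1; rwa [if_neg (by decide)] at this
  have h10 : f 1*x*g 0 = 0 := by
    have := hfg 1 0; rwa [if_neg (by decide)] at this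
  -- the kappa-polynomials
  have K3 : PairSub a ((x*x - x) + x*(x*x - x)) a := K_add hua' hk (K_mul_left x hk)
  have K4 : PairSub a ((x*x - x) + ((x*x - x) + x*(x*x - x))*x) a :=
    K_add hua' hk (K_mul_right x K3)
  refine absorb hua'
    (u - a*(Q*x)*(x*P) + a*Q*(f 0)*(x*P))
    ((f 2)*(f 1)*(x*P))
    (v - (Q*x)*(x*P)*a + (Q*x)*((g 0)*(P*a)))
    ((Q*x)*((g 1)*(g 2)))
    ?_ ?_ ?_ ?_
  · -- entry (1,1)
    have e11 : (u - a*(Q*x)*(x*P) + a*Q*(f 0)*(x*P)) * a * (v - (Q*x)*(x*P)*a + (Q*x)*((g 0)*(P*a)))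
        = a + ((a*Q)*(((x*x - x) + ((x*x - x) + x*(x*x - x))*x)*x)*(P*a)
            - (a*Q)*(x*x - x)*(P*a)
            - (a*Q)*((x*x - x) + ((x*x - x) + x*(x*x - x))*x)*((g 0)*(P*a))
            - (a*Q)*((f 0)*((x*x - x) + ((x*x - x) + x*(x*x - x))*x))*(P*a)
            + (a*Q)*((f 0)*((x*x - x) + x*(x*x - x))*(g 0))*(P*a)) := by
      calc (u - a*(Q*x)*(x*P) + a*Q*(f 0)*(x*P)) * a * (v - (Q*x)*(x*P)*a + (Q*x)*((g 0)*(P*a)))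
          = (u*a)*v - (u*a)*((Q*x)*(x*P)*a) + (u*a)*((Q*x)*((g 0)*(P*a)))
            - a*(Q*x)*(x*P)*(a*v) + a*(Q*x)*(x*(P*a*Q)*x)*((x*P)*a)
            - a*(Q*x)*(x*(P*a*Q)*x)*((g 0)*(P*a))
            + a*Q*(f 0)*(x*P)*(a*v) - (a*Q*(f 0))*(x*(P*a*Q)*x)*((x*P)*a)
            + (a*Q*(f 0))*(x*(P*a*Q)*x)*((g 0)*(P*a)) := by noncomm_ring
        _ = (u*a)*v - (u*a)*((Q*x)*(x*P)*a) + (u*a)*((Q*x)*((g 0)*(P*a)))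
            - a*(Q*x)*(x*P)*(a*v) + a*(Q*x)*(x*x*x)*((x*P)*a)
            - a*(Q*x)*(x*x*x)*((g 0)*(P*a))
            + a*Q*(f 0)*(x*P)*(a*v) - (a*Q*(f 0))*(x*x*x)*((x*P)*a)
            + (a*Q*(f 0))*(x*x*x)*((g 0)*(P*a)) := by rw [← hxfact]
        _ = (a)*v - (a)*((Q*x)*(x*P)*a) + (a)*((Q*x)*((g 0)*(P*a)))
            - a*(Q*x)*(x*P)*(a) + a*(Q*x)*(x*x*x)*((x*P)*a)
            - a*(Q*x)*(x*x*x)*((g 0)*(P*a))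
            + a*Q*(f 0)*(x*P)*(a) - (a*Q*(f 0))*(x*x*x)*((x*P)*a)
            + (a*Q*(f 0))*(x*x*x)*((g 0)*(P*a)) := by rw [hu, hv]
        _ = a - (a*Q)*(x*x)*(P*a) + (a*(Q*x))*((g 0)*(P*a))
            - (a*Q)*(x*x)*(P*a) + (a*Q)*(x*(x*x*x)*x)*(P*a)
            - (a*Q)*(x*(x*x*x))*((g 0)*(P*a))
            + (a*Q)*((f 0)*x)*(P*a) - (a*Q)*((f 0)*((x*x*x)*x))*(P*a)
            + (a*Q)*((f 0)*x*(g 0))*(P*a)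
            + (a*Q)*((f 0)*((x*x - x) + x*(x*x - x))*(g 0))*(P*a) := by
              rw [hv]; noncomm_ring
        _ = a - (a*Q)*(x*x)*(P*a) + (a*(Q*x))*((g 0)*(P*a))
            - (a*Q)*(x*x)*(P*a) + (a*Q)*(x*(x*x*x)*x)*(P*a)
            - (a*Q)*(x*(x*x*x))*((g 0)*(P*a))
            + (a*Q)*((f 0)*x)*(P*a) - (a*Q)*((f 0)*((x*x*x)*x))*(P*a)
            + (a*Q)*(x)*(P*a)
            + (a*Q)*((f 0)*((x*x - x) + x*(x*x - x))*(g 0))*(P*a) := by rw [h00]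
        _ = _ := by noncomm_ring
    refine cast (by rw [e11, add_sub_cancel_left]) ?_
    · refine K_add hua' (K_sub hua' (K_sub hua' (K_sub hua' ?_ ?_) ?_) ?_) ?_
      · exact K_mul_right (P*a) (K_mul_left (a*Q) (K_mul_right x K4))
      · exact K_mul_right (P*a) (K_mul_left (a*Q) hk)
      · exact K_mul_right ((g 0)*(P*a)) (K_mul_left (a*Q) K4)
      · exact K_mul_right (P*a) (K_mul_left (a*Q) (K_mul_left (f 0) K4))
      · exact K_mul_right (P*a) (K_mul_left (a*Q) (K_mul_right (g 0) (K_mul_left (f 0) K3)))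
  · -- entry (1,2)
    have e12 : (u - a*(Q*x)*(x*P) + a*Q*(f 0)*(x*P)) * a * ((Q*x)*((g 1)*(g 2)))
        = -((a*Q)*((x*x - x) + ((x*x - x) + x*(x*x - x))*x)*((g 1)*(g 2)))
          + (a*Q)*((f 0)*((x*x - x) + x*(x*x - x))*(g 1))*(g 2) := by
      calc (u - a*(Q*x)*(x*P) + a*Q*(f 0)*(x*P)) * a * ((Q*x)*((g 1)*(g 2)))
          = (u*a)*((Q*x)*((g 1)*(g 2))) - a*(Q*x)*(x*(P*a*Q)*x)*((g 1)*(g 2))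
            + (a*Q)*((f 0)*(x*(P*a*Q)*x))*((g 1)*(g 2)) := by noncomm_ring
        _ = (u*a)*((Q*x)*((g 1)*(g 2))) - a*(Q*x)*(x*x*x)*((g 1)*(g 2))
            + (a*Q)*((f 0)*(x*x*x))*((g 1)*(g 2)) := by rw [← hxfact]
        _ = (a)*((Q*x)*((g 1)*(g 2))) - a*(Q*x)*(x*x*x)*((g 1)*(g 2))
            + (a*Q)*((f 0)*(x*x*x))*((g 1)*(g 2)) := by rw [hu]
        _ = a*(Q*x)*((g 1)*(g 2)) - (a*Q)*(x*(x*x*x))*((g 1)*(g 2))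
            + (a*Q)*((f 0)*x*(g 1))*(g 2)
            + (a*Q)*((f 0)*((x*x - x) + x*(x*x - x))*(g 1))*(g 2) := by noncomm_ring
        _ = a*(Q*x)*((g 1)*(g 2)) - (a*Q)*(x*(x*x*x))*((g 1)*(g 2))
            + (a*Q)*(0 : R)*(g 2)
            + (a*Q)*((f 0)*((x*x - x) + x*(x*x - x))*(g 1))*(g 2) := by rw [h01]
        _ = _ := by noncomm_ring
    refine cast (by rw [e12]) ?_
    exact K_add hua' (K_neg (K_mul_right ((g 1)*(g 2)) (K_mul_left (a*Q) K4)))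
      (K_mul_right (g 2) (K_mul_left (a*Q) (K_mul_right (g 1) (K_mul_left (f 0) K3))))
  · -- entry (2,1)
    have e21 : ((f 2)*(f 1)*(x*P)) * a * (v - (Q*x)*(x*P)*a + (Q*x)*((g 0)*(P*a)))
        = -(((f 2)*(f 1))*((x*x - x) + ((x*x - x) + x*(x*x - x))*x)*(P*a))
          + (f 2)*((f 1)*((x*x - x) + x*(x*x - x))*(g 0))*(P*a) := by
      calc ((f 2)*(f 1)*(x*P)) * a * (v - (Q*x)*(x*P)*a + (Q*x)*((g 0)*(P*a)))
          = (f 2)*(f 1)*(x*P)*(a*v) - ((f 2)*(f 1))*(x*(P*a*Q)*x)*((x*P)*a)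
            + ((f 2)*(f 1))*(x*(P*a*Q)*x)*((g 0)*(P*a)) := by noncomm_ring
        _ = (f 2)*(f 1)*(x*P)*(a*v) - ((f 2)*(f 1))*(x*x*x)*((x*P)*a)
            + ((f 2)*(f 1))*(x*x*x)*((g 0)*(P*a)) := by rw [← hxfact]
        _ = (f 2)*(f 1)*(x*P)*(a) - ((f 2)*(f 1))*(x*x*x)*((x*P)*a)
            + ((f 2)*(f 1))*(x*x*x)*((g 0)*(P*a)) := by rw [hv]
        _ = ((f 2)*(f 1))*(x)*(P*a) - ((f 2)*(f 1))*((x*x*x)*x)*(P*a)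
            + (f 2)*((f 1)*x*(g 0))*(P*a)
            + (f 2)*((f 1)*((x*x - x) + x*(x*x - x))*(g 0))*(P*a) := by noncomm_ring
        _ = ((f 2)*(f 1))*(x)*(P*a) - ((f 2)*(f 1))*((x*x*x)*x)*(P*a)
            + (f 2)*(0 : R)*(P*a)
            + (f 2)*((f 1)*((x*x - x) + x*(x*x - x))*(g 0))*(P*a) := by rw [h10]
        _ = _ := by noncomm_ring
    refine cast (by rw [e21]) ?_
    exact K_add hua' (K_neg (K_mul_right (P*a) (K_mul_left ((f 2)*(f 1)) K4)))
      (K_mul_right (P*a) (K_mul_left (f 2) (K_mul_right (g 0) (K_mul_left (f 1) K3))))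
  · -- entry (2,2)
    have e22 : ((f 2)*(f 1)*(x*P)) * a * ((Q*x)*((g 1)*(g 2)))
        = x + (f 2)*((f 1)*((x*x - x) + x*(x*x - x))*(g 1))*(g 2) := by
      calc ((f 2)*(f 1)*(x*P)) * a * ((Q*x)*((g 1)*(g 2)))
          = ((f 2)*(f 1))*(x*(P*a*Q)*x)*((g 1)*(g 2)) := by noncomm_ring
        _ = ((f 2)*(f 1))*(x*x*x)*((g 1)*(g 2)) := by rw [← hxfact]
        _ = (f 2)*((f 1)*x*(g 1))*(g 2)
            + (f 2)*((f 1)*((x*x - x) + x*(x*x - x))*(g 1))*(g 2) := by noncomm_ring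
        _ = (f 2)*x*(g 2) + (f 2)*((f 1)*((x*x - x) + x*(x*x - x))*(g 1))*(g 2) := by rw [h11]
        _ = x + (f 2)*((f 1)*((x*x - x) + x*(x*x - x))*(g 1))*(g 2) := by rw [h22]
    refine cast (by rw [e22, add_sub_cancel_left]) ?_
    exact K_mul_right (g 2) (K_mul_left (f 2) (K_mul_right (g 1) (K_mul_left (f 1) K3)))

end AlmostGood


section MemRaR
variable {R : Type*} [NonUnitalRing R] {a : R}

lemma memRaR_zero : MemRaR a 0 := ⟨0, Fin.elim0, Fin.elim0, by simp⟩

lemma memRaR_single (c d : R) : MemRaR a (c*a*d) := ⟨1, ![c], ![d], by simp⟩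

lemma memRaR_add {b1 b2 : R} (h1 : MemRaR a b1) (h2 : MemRaR a b2) : MemRaR a (b1 + b2) := by
  obtain ⟨n, x, y, rfl⟩ := h1
  obtain ⟨k, x', y', rfl⟩ := h2
  refine ⟨n + k, Fin.append x x', Fin.append y y', ?_⟩
  rw [Fin.sum_univ_add]
  congr 1
  · exact Finset.sum_congr rfl fun i _ => by rw [Fin.append_left, Fin.append_left]
  · exact Finset.sum_congr rfl fun i _ => by rw [Fin.append_right, Fin.append_right]

lemma memRaR_neg {b : R} (h : MemRaR a b) : MemRaR a (-b) := by
  obtain ⟨n, x, y, rfl⟩ := h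
  refine ⟨n, fun i => -(x i), y, ?_⟩
  rw [← Finset.sum_neg_distrib]
  exact Finset.sum_congr rfl fun i _ => by noncomm_ring

lemma memRaR_mul_left (r : R) {b : R} (h : MemRaR a b) : MemRaR a (r*b) := by
  obtain ⟨n, x, y, rfl⟩ := h
  refine ⟨n, fun i => r * x i, y, ?_⟩
  rw [Finset.mul_sum]
  exact Finset.sum_congr rfl fun i _ => by noncomm_ring

lemma memRaR_mul_right (r : R) {b : R} (h : MemRaR a b) : MemRaR a (b*r) := by
  obtain ⟨n, x, y, rfl⟩ := h
  refine ⟨n, x, fun i => y i * r, ?_⟩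
  rw [Finset.sum_mul]
  exact Finset.sum_congr rfl fun i _ => by noncomm_ring

end MemRaR


section Quot

variable {R : Type*} [NonUnitalRing R] (I : TwoSidedIdeal R)

lemma quot_mk_eq_zero_iff (x : R) : (x : I.ringCon.Quotient) = 0 ↔ x ∈ I :=
  ⟨fun h => (I.mem_iff x).mpr (Quotient.exact h), fun h => Quotient.sound ((I.mem_iff x).mp h)⟩

end Quot

lemma sunital_pair {R : Type*} [NonUnitalRing R] (hR : IsSUnitalRing R) (x : R) :
    ∃ u v : R, u*x = x ∧ x*v = x := by
  obtain ⟨⟨u, hu⟩, ⟨v, hv⟩⟩ := hR x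
  exact ⟨u, v, hu, hv⟩

section Atom

variable {R : Type*} [NonUnitalRing R]

/-- Every element of `I` of the form `c*a*d` lies in `K(a)`. -/
lemma atom_in_K (hR : IsSUnitalRing R) (I : TwoSidedIdeal R)
    (hidem : ∀ (c : TwoSidedIdeal ↥I) (D : TwoSidedIdeal c.ringCon.Quotient),
        (∃ x ∈ D, x ≠ 0) → ∃ x ∈ D, x ≠ 0 ∧ IsIdempotentElem x)
    (hIppi : IsProperlyPurelyInfiniteRing I)
    (a : R) {m : R} (hmI : m ∈ I) (c d : R) (hm : m = c*a*d) :
    PairSub a m a := by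
  have hua : ∃ u v : R, u*a = a ∧ a*v = a := sunital_pair hR a
  rcases eq_or_ne m 0 with rfl | hm0
  · exact K_zero hua
  -- `K(a) ∩ I` as a two-sided ideal of `I`
  set K : TwoSidedIdeal I := TwoSidedIdeal.mk' {z : ↥I | PairSub a (z : R) a}
    (K_zero hua)
    (fun hy hz => K_add hua hy hz)
    (fun hz => by simpa using K_neg hz)
    (fun hz => K_mul_left _ hz)
    (fun hz => K_mul_right _ hz) with hK
  have memK : ∀ z : ↥I, z ∈ K ↔ PairSub a (z : R) a := fun z => by
    rw [hK, TwoSidedIdeal.mem_mk']; rfl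
  by_contra hcon
  -- the ideal of the quotient generated by the image of `m`
  set D : TwoSidedIdeal K.ringCon.Quotient := TwoSidedIdeal.mk'
    {q : K.ringCon.Quotient | ∃ z : ↥I, (z : K.ringCon.Quotient) = q ∧ MemRaR m (z : R)}
    ⟨0, rfl, memRaR_zero⟩
    (fun {q1 q2} h1 h2 => by
      obtain ⟨z1, hz1, hmem1⟩ := h1
      obtain ⟨z2, hz2, hmem2⟩ := h2
      exact ⟨z1 + z2, by rw [← hz1, ← hz2]; rfl, memRaR_add hmem1 hmem2⟩)
    (fun {q} h => by
      obtain ⟨z, hz, hmem⟩ := h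
      exact ⟨-z, by rw [← hz]; rfl, by simpa using memRaR_neg hmem⟩)
    (fun {q1 q2} h2 => by
      obtain ⟨z2, hz2, hmem2⟩ := h2
      obtain ⟨y, hy⟩ := Quotient.exists_rep q1
      exact ⟨y * z2, by rw [← hz2, ← hy]; rfl, memRaR_mul_left _ hmem2⟩)
    (fun {q1 q2} h1 => by
      obtain ⟨z1, hz1, hmem1⟩ := h1
      obtain ⟨y, hy⟩ := Quotient.exists_rep q2
      exact ⟨z1 * y, by rw [← hz1, ← hy]; rfl, memRaR_mul_right _ hmem1⟩) with hD
  have memD : ∀ q, q ∈ D ↔ ∃ z : ↥I, (z : K.ringCon.Quotient) = q ∧ MemRaR m (z : R) :=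
    fun q => by rw [hD, TwoSidedIdeal.mem_mk']; rfl
  -- the image of m in the quotient is a nonzero element of D
  have hmem_m : MemRaR m m := by
    obtain ⟨u, v, hu, hv⟩ := sunital_pair hR m
    exact ⟨1, ![u], ![v], by simp [hu, hv]⟩
  have hmQ : ((⟨m, hmI⟩ : ↥I) : K.ringCon.Quotient) ∈ D :=
    (memD _).mpr ⟨⟨m, hmI⟩, rfl, hmem_m⟩
  have hmQ0 : ((⟨m, hmI⟩ : ↥I) : K.ringCon.Quotient) ≠ 0 := by
    rw [Ne, quot_mk_eq_zero_iff K ⟨m, hmI⟩, memK]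
    exact hcon
  obtain ⟨xq, hxqD, hxq0, hxqidem⟩ := hidem K D ⟨_, hmQ, hmQ0⟩
  obtain ⟨z, hz, hzmem⟩ := (memD xq).mp hxqD
  -- collapse the sum representation of z into a single sandwich
  have hmpi : PairSub m m m := by
    have h := hIppi ⟨m, hmI⟩ (fun h0 => hm0 (congrArg Subtype.val h0))
    exact pairSub_coe I h.2
  obtain ⟨T, A, B, hsum⟩ := hzmem
  obtain ⟨C, E, hCE⟩ := collapse (sunital_pair hR m) hmpi A B
  -- basic facts about z
  have hzK : z ∉ K := by
    intro h
    exact hxq0 (by rw [← hz, quot_mk_eq_zero_iff K z]; exact h)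
  have hxK : ¬ PairSub a (z : R) a := fun h => hzK ((memK z).mpr h)
  have hz0 : z ≠ 0 := by
    rintro rfl
    exact hxK (K_zero hua)
  have hxpi : PairSub (z : R) (z : R) (z : R) :=
    pairSub_coe I (hIppi z hz0).2
  have hidem' : PairSub a ((z : R)*(z : R) - (z : R)) a := by
    have hzz : (z*z - z : ↥I) ∈ K := by
      rw [← quot_mk_eq_zero_iff K]
      have h1 : ((z*z - z : ↥I) : K.ringCon.Quotient)
          = (z : K.ringCon.Quotient)*(z : K.ringCon.Quotient) - (z : K.ringCon.Quotient) := rfl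
      rw [h1, hz, hxqidem.eq, sub_self]
    have := (memK _).mp hzz
    simpa using this
  have hfact : (z : R) = (C*c)*a*(d*E) := by
    have h1 : (z : R) = C*m*E := by rw [hsum, hCE]
    rw [h1, hm]
    noncomm_ring
  exact hxK (almostGood hua (sunital_pair hR (z : R)) hfact hxpi hidem')

end Atom


/-- Proposition 3.10 (spiextn): let `R` be an s-unital ring and `I` an s-unital two-sided
ideal of `R` such that every nonzero two-sided ideal in every quotient of the ring `I`
contains a nonzero idempotent. Then `R` is properly purely infinite if and only if both `I`
and `R/I` are properly purely infinite. -/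
theorem properlyPurelyInfinite_extension {R : Type*} [NonUnitalRing R]
    (hR : IsSUnitalRing R) (I : TwoSidedIdeal R) (hI : IsSUnitalRing I)
    (hidem : ∀ (c : TwoSidedIdeal ↥I) (D : TwoSidedIdeal c.ringCon.Quotient),
        (∃ x ∈ D, x ≠ 0) → ∃ x ∈ D, x ≠ 0 ∧ IsIdempotentElem x) :
    IsProperlyPurelyInfiniteRing R ↔
      (IsProperlyPurelyInfiniteRing I ∧ IsProperlyPurelyInfiniteRing I.ringCon.Quotient) := by
  constructor
  · intro hppi
    constructor
    · -- ideals inherit proper pure infiniteness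
      intro a ha
      have haR : (a : R) ≠ 0 := fun h => ha (Subtype.ext h)
      obtain ⟨-, hps⟩ := hppi (a : R) haR
      obtain ⟨g1, g2, d1, d2, h11, h12, h21, h22⟩ := pairSub_elim hps
      obtain ⟨⟨u, hu⟩, ⟨v, hv⟩⟩ := hI a
      have hu' : (u : R) * (a : R) = (a : R) := congrArg Subtype.val hu
      have hv' : (a : R) * (v : R) = (a : R) := congrArg Subtype.val hv
      refine ⟨ha, ?_⟩
      have memG : ∀ g : R, (u : R) * g ∈ I := fun g => I.mul_mem_right _ _ u.2
      have memD : ∀ d : R, d * (v : R) ∈ I := fun d => I.mul_mem_left _ _ v.2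
      refine pairSub_of (⟨(u:R)*g1, memG g1⟩ : I) ⟨(u:R)*g2, memG g2⟩
        ⟨d1*(v:R), memD d1⟩ ⟨d2*(v:R), memD d2⟩ ?_ ?_ ?_ ?_ <;>
      · apply Subtype.ext
        show (u:R) * _ * ((a:R)) * (_ * (v:R)) = _
        calc (u:R) * _ * ((a:R)) * (_ * (v:R))
            = (u:R) * (_ * (a:R) * _) * (v:R) := by noncomm_ring
          _ = _ := by
              first
                | (rw [h11]; rw [hu', hv'])
                | (rw [h12]; simp)
                | (rw [h21]; simp)
                | (rw [h22]; rw [hu', hv'])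
    · -- quotients inherit proper pure infiniteness
      intro q hq
      obtain ⟨x, rfl⟩ := Quotient.exists_rep q
      have hx : x ≠ 0 := by rintro rfl; exact hq rfl
      obtain ⟨-, hps⟩ := hppi x hx
      obtain ⟨g1, g2, d1, d2, h11, h12, h21, h22⟩ := pairSub_elim hps
      refine ⟨hq, ?_⟩
      refine pairSub_of (↑g1) (↑g2) (↑d1) (↑d2) ?_ ?_ ?_ ?_
      · exact congrArg (fun y : R => (y : I.ringCon.Quotient)) h11
      · exact congrArg (fun y : R => (y : I.ringCon.Quotient)) h12
      · exact congrArg (fun y : R => (y : I.ringCon.Quotient)) h21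
      · exact congrArg (fun y : R => (y : I.ringCon.Quotient)) h22
  · rintro ⟨hIppi, hQppi⟩
    intro a ha
    refine ⟨ha, ?_⟩
    by_cases haI : a ∈ I
    · -- a ∈ I: inherit from I
      exact pairSub_coe I (hIppi ⟨a, haI⟩ (fun h0 => ha (congrArg Subtype.val h0))).2
    · -- a ∉ I: lift proper infiniteness from the quotient and absorb the errors
      have hua : ∃ u v : R, u*a = a ∧ a*v = a := sunital_pair hR a
      have haQ : (a : I.ringCon.Quotient) ≠ 0 := by
        rw [Ne, quot_mk_eq_zero_iff]; exact haI
      obtain ⟨-, hps⟩ := hQppi _ haQ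
      obtain ⟨q1, q2, e1, e2, k11, k12, k21, k22⟩ := pairSub_elim hps
      obtain ⟨α1, hα1⟩ := Quotient.exists_rep q1
      obtain ⟨α2, hα2⟩ := Quotient.exists_rep q2
      obtain ⟨β1, hβ1⟩ := Quotient.exists_rep e1
      obtain ⟨β2, hβ2⟩ := Quotient.exists_rep e2
      have hα1' : (α1 : I.ringCon.Quotient) = q1 := hα1
      have hα2' : (α2 : I.ringCon.Quotient) = q2 := hα2
      have hβ1' : (β1 : I.ringCon.Quotient) = e1 := hβ1
      have hβ2' : (β2 : I.ringCon.Quotient) = e2 := hβ2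
      -- the error terms lie in I
      have h11' : α1*a*β1 - a ∈ I := by
        rw [← quot_mk_eq_zero_iff I]
        show ((α1 : I.ringCon.Quotient)*(a : I.ringCon.Quotient)*(β1 : I.ringCon.Quotient)
          - (a : I.ringCon.Quotient)) = 0
        rw [hα1', hβ1', k11, sub_self]
      have h22' : α2*a*β2 - a ∈ I := by
        rw [← quot_mk_eq_zero_iff I]
        show ((α2 : I.ringCon.Quotient)*(a : I.ringCon.Quotient)*(β2 : I.ringCon.Quotient)
          - (a : I.ringCon.Quotient)) = 0
        rw [hα2', hβ2', k22, sub_self]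
      have h12' : α1*a*β2 ∈ I := by
        rw [← quot_mk_eq_zero_iff I]
        show ((α1 : I.ringCon.Quotient)*(a : I.ringCon.Quotient)*(β2 : I.ringCon.Quotient)) = 0
        rw [hα1', hβ2', k12]
      have h21' : α2*a*β1 ∈ I := by
        rw [← quot_mk_eq_zero_iff I]
        show ((α2 : I.ringCon.Quotient)*(a : I.ringCon.Quotient)*(β1 : I.ringCon.Quotient)) = 0
        rw [hα2', hβ1', k21]
      -- helper: an element of I of the form α*a*β is in K(a)
      have hKatomI : ∀ (w α β : R), w ∈ I → w = α*a*β → PairSub a w a := by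
        intro w α β hw hwform
        obtain ⟨uI, vI, hu', hv'⟩ := sunital_pair hI ⟨w, hw⟩
        have hl : (uI : R)*w = w := congrArg Subtype.val hu'
        have hr : w*(vI : R) = w := congrArg Subtype.val hv'
        have heq : w = ((uI : R)*α)*a*(β*(vI : R)) := by
          calc w = (uI : R)*w*(vI : R) := by rw [hl, hr]
            _ = ((uI : R)*α)*a*(β*(vI : R)) := by rw [hwform]; noncomm_ring
        have hmem : ((uI : R)*α)*a*(β*(vI : R)) ∈ I := heq ▸ hw
        rw [heq]
        exact atom_in_K hR I hidem hIppi a hmem _ _ rfl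
      -- helper: an element of I of the form α*a*β - a is in K(a)
      have hKerr : ∀ (w α β : R), w ∈ I → w = α*a*β - a → PairSub a w a := by
        intro w α β hw hwform
        obtain ⟨uI, vI, hu', hv'⟩ := sunital_pair hI ⟨w, hw⟩
        have hl : (uI : R)*w = w := congrArg Subtype.val hu'
        have hr : w*(vI : R) = w := congrArg Subtype.val hv'
        have heq : w = ((uI : R)*α)*a*(β*(vI : R)) - ((uI : R))*a*((vI : R)) := by
          calc w = (uI : R)*w*(vI : R) := by rw [hl, hr]
            _ = _ := by rw [hwform]; noncomm_ring
        have hm1 : ((uI : R)*α)*a*(β*(vI : R)) ∈ I :=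
          I.mul_mem_right _ _ (I.mul_mem_right _ _ (I.mul_mem_right _ _ uI.2))
        have hm2 : ((uI : R))*a*((vI : R)) ∈ I :=
          I.mul_mem_right _ _ (I.mul_mem_right _ _ uI.2)
        rw [heq]
        exact K_sub hua (atom_in_K hR I hidem hIppi a hm1 _ _ rfl)
          (atom_in_K hR I hidem hIppi a hm2 _ _ rfl)
      exact absorb hua α1 α2 β1 β2
        (hKerr _ α1 β1 h11' rfl)
        (hKatomI _ α1 β2 h12' rfl)
        (hKatomI _ α2 β1 h21' rfl)
        (hKerr _ α2 β2 h22' rfl)
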